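/- Let < be a bi-order on a group G, let C < D be a convex jump with Conrad homomorphism φ : D → (ℝ, +), and let g ∈ G satisfy gCg⁻¹ = C and gDg⁻¹ = D. Then there exists a unique real number α_g > 0 such that φ(g h g⁻¹) = α_g · φ(h) for all h ∈ D. -/

import Mathlib

/-- A bi-order on a group `G`: a strict linear order (irreflexive, transitive, total)
invariant under left and right multiplication. -/
structure IsBiOrder {G : Type*} [Group G] (r : G → G → Prop) : Prop where
  irrefl : ∀ x, ¬ r x x
  trans : ∀ x y z, r x y → r y z → r x z
  total : ∀ x y, x ≠ y → r x y ∨ r y x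
  mul_left : ∀ x y z, r x y → r (z * x) (z * y)
  mul_right : ∀ x y z, r x y → r (x * z) (y * z)

/-- The supremum of a set of reals, computed in the extended reals `[-∞, +∞]`
(so that `realSup ∅ = ⊥ = -∞`). -/
noncomputable def realSup (s : Set ℝ) : EReal :=
  sSup ((fun x : ℝ => (x : EReal)) '' s)

/-- A subgroup `C` is convex with respect to the order `r`: if `a ≤ g ≤ b`
with `a, b ∈ C`, then `g ∈ C`. -/
def IsConvexSubgroup {G : Type*} [Group G] (r : G → G → Prop) (C : Subgroup G) : Prop :=
  ∀ a b g : G, a ∈ C → b ∈ C → (r a g ∨ a = g) → (r g b ∨ g = b) → g ∈ C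

/-- `C ⊊ D` is a convex jump: both are convex and no convex subgroup lies strictly
between them. -/
def IsConvexJump {G : Type*} [Group G] (r : G → G → Prop) (C D : Subgroup G) : Prop :=
  IsConvexSubgroup r C ∧ IsConvexSubgroup r D ∧ C < D ∧
    ∀ E : Subgroup G, IsConvexSubgroup r E → C < E → ¬ E < D

lemma Hom_one {D : Type*} [Group D] (f : D → ℝ)
    (hadd : ∀ x y, f (x*y) = f x + f y) : f 1 = 0 := by
  have := hadd 1 1; simp at this; linarith

lemma Hom_inv {D : Type*} [Group D] (f : D → ℝ)
    (hadd : ∀ x y, f (x*y) = f x + f y) (x : D) : f x⁻¹ = - f x := by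
  have := hadd x x⁻¹; simp [Hom_one f hadd] at this; linarith

lemma Hom_zpow {D : Type*} [Group D] (f : D → ℝ)
    (hadd : ∀ x y, f (x*y) = f x + f y) (x : D) (n : ℤ) : f (x ^ n) = n * f x := by
  induction n using Int.induction_on with
  | zero => simpa using Hom_one f hadd
  | succ k ih => rw [zpow_add, zpow_one, hadd, ih]; push_cast; ring
  | pred k ih =>
      rw [show -(k:ℤ) - 1 = (-k) + (-1) by ring, zpow_add, hadd, ih,
        zpow_neg, zpow_one, Hom_inv f hadd]
      push_cast; ring

lemma conrad_sign {G : Type*} [Group G] (r : G → G → Prop) (hr : IsBiOrder r)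
    (C D : Subgroup G) (f : D → ℝ)
    (hadd : ∀ x y : D, f (x * y) = f x + f y)
    (hker : ∀ x : D, f x = 0 ↔ (x : G) ∈ C)
    (hpos : ∀ x : D, r 1 (x : G) → (x : G) ∉ C → 0 < f x)
    (x : D) : 0 < f x ↔ (r 1 (x : G) ∧ (x : G) ∉ C) := by
  constructor
  · intro hf
    have hxC : (x : G) ∉ C := fun hc => by
      have := (hker x).mpr hc; linarith
    refine ⟨?_, hxC⟩
    by_contra hnot
    have hne : (x : G) ≠ 1 := by
      intro h1; exact hxC (h1 ▸ C.one_mem)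
    rcases hr.total 1 (x : G) (Ne.symm hne) with h | h
    · exact hnot h
    · have h1 : r ((x : G)⁻¹ * (x : G)) ((x : G)⁻¹ * 1) := hr.mul_left _ _ _ h
      rw [inv_mul_cancel, mul_one] at h1
      have hinvC : ((x⁻¹ : D) : G) ∉ C := by
        intro hc
        exact hxC (by simpa using C.inv_mem hc)
      have := hpos x⁻¹ h1 hinvC
      rw [Hom_inv f hadd] at this
      linarith
  · rintro ⟨h1, h2⟩; exact hpos x h1 h2


/-- If `g` normalizes both subgroups of a convex jump `C < D`, then conjugation by `g`
corresponds, through the Conrad homomorphism `φ` of the jump, to multiplication by a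
unique positive real number `α`. -/
theorem conrad_homomorphism_conjugation_scalar {G : Type*} [Group G]
    (r : G → G → Prop) (hr : IsBiOrder r)
    (C D : Subgroup G) (hCD : IsConvexJump r C D)
    (φ : D → ℝ)
    (hadd : ∀ x y : D, φ (x * y) = φ x + φ y)
    (hker : ∀ x : D, φ x = 0 ↔ (x : G) ∈ C)
    (hpos : ∀ x : D, r 1 (x : G) → (x : G) ∉ C → 0 < φ x)
    (g : G)
    (hgC : ∀ x : G, x ∈ C ↔ g * x * g⁻¹ ∈ C)
    (hgD : ∀ x : G, x ∈ D ↔ g * x * g⁻¹ ∈ D) :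
    ∃! α : ℝ, 0 < α ∧ ∀ (h : G) (hm : h ∈ D) (hm' : g * h * g⁻¹ ∈ D),
      φ ⟨g * h * g⁻¹, hm'⟩ = α * φ ⟨h, hm⟩ := by
  classical
  have conjD : ∀ x : D, g * (x : G) * g⁻¹ ∈ D := fun x => (hgD x).mp x.2
  set ψ : D → ℝ := fun x => φ ⟨g * (x : G) * g⁻¹, conjD x⟩ with hψdef
  have hψadd : ∀ x y : D, ψ (x * y) = ψ x + ψ y := by
    intro x y
    have hxy : (⟨g * ((x * y : D) : G) * g⁻¹, conjD (x * y)⟩ : D) =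
        (⟨g * (x : G) * g⁻¹, conjD x⟩ : D) * ⟨g * (y : G) * g⁻¹, conjD y⟩ := by
      ext
      push_cast
      group
    simp only [hψdef, hxy, hadd]
  have hψker : ∀ x : D, ψ x = 0 ↔ (x : G) ∈ C := by
    intro x
    simp only [hψdef, hker]
    exact (hgC x).symm
  have hψpos : ∀ x : D, r 1 (x : G) → (x : G) ∉ C → 0 < ψ x := by
    intro x h1 h2
    have hc : r 1 (g * (x : G) * g⁻¹) := by
      have := hr.mul_right _ _ g⁻¹ (hr.mul_left _ _ g h1)
      simpa [mul_assoc] using this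
    have hc2 : g * (x : G) * g⁻¹ ∉ C := fun hc' => h2 ((hgC x).mpr hc')
    exact hpos _ hc hc2
  -- sign agreement
  have keyS : ∀ x : D, 0 < φ x ↔ 0 < ψ x := by
    intro x
    rw [conrad_sign r hr C D φ hadd hker hpos x,
      conrad_sign r hr C D ψ hψadd hψker hψpos x]
  -- pick d with φ d > 0
  obtain ⟨d0, hd0D, hd0C⟩ := SetLike.exists_of_lt hCD.2.2.1
  have hd0ne : φ ⟨d0, hd0D⟩ ≠ 0 := fun h => hd0C ((hker _).mp h)
  obtain ⟨d, hdpos⟩ : ∃ d : D, 0 < φ d := by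
    rcases lt_or_gt_of_ne hd0ne with h | h
    · exact ⟨(⟨d0, hd0D⟩ : D)⁻¹, by rw [Hom_inv φ hadd]; linarith⟩
    · exact ⟨⟨d0, hd0D⟩, h⟩
  have hψd : 0 < ψ d := (keyS d).mp hdpos
  -- proportionality
  have hprop : ∀ h : D, ψ h * φ d = ψ d * φ h := by
    intro h
    by_contra hne
    rcases lt_or_gt_of_ne hne with hlt | hgt
    · -- ψ h / ψ d < φ h / φ d
      have : ψ h / ψ d < φ h / φ d := by
        rw [div_lt_div_iff₀ hψd hdpos]; linarith
      obtain ⟨s, hs1, hs2⟩ := exists_rat_btwn this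
      set x : D := h ^ (s.den : ℤ) * d ^ (-s.num) with hxdef
      have hden : (0:ℝ) < (s.den : ℝ) := by exact_mod_cast s.pos
      have hsval : ((s.num : ℝ)) = s * s.den := by
        rw [mul_comm]
        exact_mod_cast (Rat.den_mul_eq_num s).symm
      have hφx : 0 < φ x := by
        rw [hxdef, hadd, Hom_zpow φ hadd, Hom_zpow φ hadd]
        push_cast
        have : (s:ℝ) * φ d < φ h := by
          rw [lt_div_iff₀ hdpos] at hs2; linarith
        nlinarith [mul_pos hden hdpos]
      have hψx : ψ x < 0 := by
        rw [hxdef, hψadd, Hom_zpow ψ hψadd, Hom_zpow ψ hψadd]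
        push_cast
        have : ψ h < (s:ℝ) * ψ d := by
          rw [div_lt_iff₀ hψd] at hs1; linarith
        nlinarith [mul_pos hden hψd]
      have := (keyS x).mp hφx
      linarith
    · have : φ h / φ d < ψ h / ψ d := by
        rw [div_lt_div_iff₀ hdpos hψd]; linarith
      obtain ⟨s, hs1, hs2⟩ := exists_rat_btwn this
      set x : D := h ^ (s.den : ℤ) * d ^ (-s.num) with hxdef
      have hden : (0:ℝ) < (s.den : ℝ) := by exact_mod_cast s.pos
      have hsval : ((s.num : ℝ)) = s * s.den := by
        rw [mul_comm]
        exact_mod_cast (Rat.den_mul_eq_num s).symm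
      have hψx : 0 < ψ x := by
        rw [hxdef, hψadd, Hom_zpow ψ hψadd, Hom_zpow ψ hψadd]
        push_cast
        have : (s:ℝ) * ψ d < ψ h := by
          rw [lt_div_iff₀ hψd] at hs2; linarith
        nlinarith [mul_pos hden hψd]
      have hφx : φ x < 0 := by
        rw [hxdef, hadd, Hom_zpow φ hadd, Hom_zpow φ hadd]
        push_cast
        have : φ h < (s:ℝ) * φ d := by
          rw [div_lt_iff₀ hdpos] at hs1; linarith
        nlinarith [mul_pos hden hdpos]
      have := (keyS x).mpr hψx
      linarith
  refine ⟨ψ d / φ d, ⟨div_pos hψd hdpos, ?_⟩, ?_⟩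
  · intro h hm hm'
    have : φ (⟨g * h * g⁻¹, hm'⟩ : D) = ψ ⟨h, hm⟩ := rfl
    rw [this]
    have := hprop ⟨h, hm⟩
    field_simp
    linarith
  · rintro α' ⟨hα'pos, hα'⟩
    have h1 : ψ d = α' * φ d := by
      have := hα' (d : G) d.2 (conjD d)
      simpa [hψdef] using this
    field_simp
    linarith [hprop d]
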